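/- Let h_{ij} > 0 and ĥ_{ij} > 0 for (i,j) in a finite set T. Define Δ = (1/2) Σ_{(i,j)∈T} | ĥ_{ij}/Σ_{(i',j')∈T} ĥ_{i'j'} − h_{ij}/Σ_{(i',j')∈T} h_{i'j'} |. Then Δ ≤ (Σ_{(i,j)∈T} |ĥ_{ij} − h_{ij}|) / (Σ_{(i',j')∈T} ĥ_{i'j'}). -/

import Mathlib

open Finset

/-- Lemma 2 of the paper: half the ℓ₁ distance between the two normalized
positive weight vectors is bounded by the ℓ₁ estimation error of the unnormalized weights
divided by the estimated normalizing constant. -/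
theorem normalized_weights_l1_bound {ι : Type*} (T : Finset ι) (h hhat : ι → ℝ)
    (hpos : ∀ i ∈ T, 0 < h i) (hhatpos : ∀ i ∈ T, 0 < hhat i) :
    (1 / 2) * ∑ i ∈ T, |hhat i / (∑ j ∈ T, hhat j) - h i / (∑ j ∈ T, h j)| ≤
      (∑ i ∈ T, |hhat i - h i|) / (∑ j ∈ T, hhat j) := by
  rcases T.eq_empty_or_nonempty with rfl | hne
  · simp
  set A := ∑ j ∈ T, hhat j with hAdef
  set B := ∑ j ∈ T, h j with hBdef
  have hA : 0 < A := Finset.sum_pos hhatpos hne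
  have hB : 0 < B := Finset.sum_pos hpos hne
  have hE : 0 ≤ ∑ i ∈ T, |hhat i - h i| := Finset.sum_nonneg fun i _ => abs_nonneg _
  have hdiff : |B - A| ≤ ∑ i ∈ T, |hhat i - h i| := by
    rw [hBdef, hAdef, ← Finset.sum_sub_distrib]
    calc |∑ i ∈ T, (h i - hhat i)| ≤ ∑ i ∈ T, |h i - hhat i| :=
          Finset.abs_sum_le_sum_abs _ _
      _ = ∑ i ∈ T, |hhat i - h i| := by
          exact Finset.sum_congr rfl fun i _ => abs_sub_comm _ _
  have key : ∑ i ∈ T, |hhat i / A - h i / B| ≤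
      (∑ i ∈ T, |hhat i - h i|) / A + |B - A| / A := by
    have step : ∀ i ∈ T, |hhat i / A - h i / B| ≤
        |hhat i - h i| / A + h i * |B - A| / (A * B) := by
      intro i hi
      have : hhat i / A - h i / B = (hhat i - h i) / A + h i * (B - A) / (A * B) := by
        field_simp
        ring
      rw [this]
      calc |(hhat i - h i) / A + h i * (B - A) / (A * B)| ≤
            |(hhat i - h i) / A| + |h i * (B - A) / (A * B)| := abs_add_le _ _
        _ = |hhat i - h i| / A + h i * |B - A| / (A * B) := by
            rw [abs_div, abs_div, abs_mul, abs_mul, abs_of_pos hA, abs_of_pos hB,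
              abs_of_pos (hpos i hi)]
    calc ∑ i ∈ T, |hhat i / A - h i / B| ≤
          ∑ i ∈ T, (|hhat i - h i| / A + h i * |B - A| / (A * B)) :=
        Finset.sum_le_sum step
      _ = (∑ i ∈ T, |hhat i - h i|) / A + (∑ i ∈ T, h i) * |B - A| / (A * B) := by
          rw [Finset.sum_add_distrib, ← Finset.sum_div]
          congr 1
          simp only [mul_div_assoc]
          rw [← Finset.sum_mul]
      _ = (∑ i ∈ T, |hhat i - h i|) / A + |B - A| / A := by
          rw [← hBdef]
          congr 1
          field_simp
  have h2 : |B - A| / A ≤ (∑ i ∈ T, |hhat i - h i|) / A := by gcongr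
  linarith
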